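/- For any proper lower semicontinuous convex function φ on ℝ^m and c > 0, every element G of Clarke's generalized Jacobian ∂(prox_{φ/c})(z) is a symmetric positive semidefinite matrix with operator norm ‖G‖ ≤ 1. -/

import Mathlib

open Filter Topology ContinuousLinearMap

section Aux

variable {E : Type*} [NormedAddCommGroup E] [InnerProductSpace ℝ E]

/-- Variational inequality for the prox operator. -/
lemma prox_varineq (φ : E → ℝ) (hconv : ConvexOn ℝ Set.univ φ)
    (c : ℝ) (hc : 0 < c) (prox : E → E)
    (hprox : ∀ w u, φ (prox w) + c / 2 * ‖prox w - w‖ ^ 2 ≤ φ u + c / 2 * ‖u - w‖ ^ 2)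
    (x u : E) :
    c * (inner ℝ (x - prox x) (u - prox x) : ℝ) ≤ φ u - φ (prox x) := by
  set px := prox x with hpx
  set D : ℝ := φ u - φ px with hD
  set ip : ℝ := inner ℝ (px - x) (u - px) with hip
  set Q : ℝ := ‖u - px‖ ^ 2 with hQ
  have key : ∀ t : ℝ, 0 < t → t ≤ 1 →
      0 ≤ D + c * ip + c * t / 2 * Q := by
    intro t ht ht1
    have hut : px + t • (u - px) = (1 - t) • px + t • u := by
      rw [smul_sub, sub_smul, one_smul]; abel
    have hcx : φ (px + t • (u - px)) ≤ (1 - t) * φ px + t * φ u := by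
      rw [hut]
      exact hconv.2 (Set.mem_univ px) (Set.mem_univ u) (by linarith) (le_of_lt ht) (by ring)
    have hqd : ‖(px + t • (u - px)) - x‖ ^ 2
        = ‖px - x‖ ^ 2 + 2 * (t * ip) + t ^ 2 * Q := by
      have h1 : (px + t • (u - px)) - x = (px - x) + t • (u - px) := by abel
      rw [h1, norm_add_sq_real, real_inner_smul_right, norm_smul, mul_pow]
      simp [sq_abs, hip, hQ]
    have hmin := hprox x (px + t • (u - px))
    rw [hqd] at hmin
    have h0 : 0 ≤ t * (D + c * ip + c * t / 2 * Q) := by nlinarith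
    nlinarith
  have hlim : Tendsto (fun n : ℕ => D + c * ip + c * (1 / (n + 1)) / 2 * Q)
      atTop (𝓝 (D + c * ip + c * 0 / 2 * Q)) := by
    refine tendsto_const_nhds.add ?_
    exact ((tendsto_one_div_add_atTop_nhds_zero_nat.const_mul c).div_const 2).mul_const Q
  have h2 : 0 ≤ D + c * ip := by
    have := ge_of_tendsto hlim (Eventually.of_forall (fun n : ℕ => by
      refine key (1 / (n + 1)) (by positivity) ?_
      rw [div_le_one (by positivity)]
      linarith [Nat.cast_nonneg (α := ℝ) n]))
    simpa using this
  have hneg : (inner ℝ (x - px) (u - px) : ℝ) = -ip := by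
    rw [hip, ← inner_neg_left, neg_sub]
  rw [hneg]
  linarith

/-- Firm nonexpansiveness. -/
lemma prox_firm (φ : E → ℝ) (hconv : ConvexOn ℝ Set.univ φ)
    (c : ℝ) (hc : 0 < c) (prox : E → E)
    (hprox : ∀ w u, φ (prox w) + c / 2 * ‖prox w - w‖ ^ 2 ≤ φ u + c / 2 * ‖u - w‖ ^ 2)
    (x y : E) :
    ‖prox x - prox y‖ ^ 2 ≤ (inner ℝ (prox x - prox y) (x - y) : ℝ) := by
  have h1 := prox_varineq φ hconv c hc prox hprox x (prox y)
  have h2 := prox_varineq φ hconv c hc prox hprox y (prox x)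
  set px := prox x
  set py := prox y
  have h1' : c * (inner ℝ (px - x) (px - py) : ℝ) ≤ φ py - φ px := by
    rw [show px - x = -(x - px) by abel, show px - py = -(py - px) by abel, inner_neg_neg]
    exact h1
  have hadd : c * ((inner ℝ ((px - py) - (x - y)) (px - py)) : ℝ) ≤ 0 := by
    rw [show (px - py) - (x - y) = (px - x) + (y - py) by abel, inner_add_left, mul_add]
    linarith
  have hsub : (inner ℝ ((px - py) - (x - y)) (px - py) : ℝ)
      = ‖px - py‖ ^ 2 - (inner ℝ (x - y) (px - py) : ℝ) := by
    rw [inner_sub_left, real_inner_self_eq_norm_sq]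
  rw [hsub] at hadd
  have hX : ‖px - py‖ ^ 2 - (inner ℝ (x - y) (px - py) : ℝ) ≤ 0 := by nlinarith
  rw [real_inner_comm]
  linarith

lemma prox_nonexp (φ : E → ℝ) (hconv : ConvexOn ℝ Set.univ φ)
    (c : ℝ) (hc : 0 < c) (prox : E → E)
    (hprox : ∀ w u, φ (prox w) + c / 2 * ‖prox w - w‖ ^ 2 ≤ φ u + c / 2 * ‖u - w‖ ^ 2)
    (x y : E) : ‖prox x - prox y‖ ≤ ‖x - y‖ := by
  have h1 := prox_firm φ hconv c hc prox hprox x y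
  have h2 := real_inner_le_norm (prox x - prox y) (x - y)
  nlinarith [norm_nonneg (prox x - prox y), norm_nonneg (x - y)]

set_option maxHeartbeats 1000000 in
lemma moreau_hasFDerivAt (φ : E → ℝ) (hconv : ConvexOn ℝ Set.univ φ)
    (c : ℝ) (hc : 0 < c) (prox : E → E)
    (hprox : ∀ w u, φ (prox w) + c / 2 * ‖prox w - w‖ ^ 2 ≤ φ u + c / 2 * ‖u - w‖ ^ 2)
    (w : E) :
    HasFDerivAt (fun x => φ (prox x) + c / 2 * ‖prox x - x‖ ^ 2)
      (c • (innerSL ℝ (w - prox w))) w := by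
  set M : E → ℝ := fun x => φ (prox x) + c / 2 * ‖prox x - x‖ ^ 2 with hM
  set L : E →L[ℝ] ℝ := c • (innerSL ℝ (w - prox w)) with hL
  have hbound : ∀ x : E, |M x - M w - L (x - w)| ≤ 3 * c * ‖x - w‖ ^ 2 := by
    intro x
    have hLval : L (x - w) = c * (inner ℝ (w - prox w) (x - w) : ℝ) := by
      rw [hL]
      simp only [ContinuousLinearMap.smul_apply, innerSL_apply_apply, smul_eq_mul]
    rw [abs_le]
    constructor
    · -- lower bound
      have hmw := hprox w (prox x)
      have hexp : ‖prox x - w‖ ^ 2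
          = ‖prox x - x‖ ^ 2 + 2 * (inner ℝ (prox x - x) (x - w) : ℝ) + ‖x - w‖ ^ 2 := by
        have h1 : prox x - w = (prox x - x) + (x - w) := by abel
        rw [h1, norm_add_sq_real]
      have hdiff : (inner ℝ ((x - prox x) - (w - prox w)) (x - w) : ℝ)
          = (inner ℝ (x - prox x) (x - w) : ℝ) - (inner ℝ (w - prox w) (x - w) : ℝ) := by
        rw [inner_sub_left]
      have hcs : -(‖(x - prox x) - (w - prox w)‖ * ‖x - w‖)
          ≤ (inner ℝ ((x - prox x) - (w - prox w)) (x - w) : ℝ) :=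
        neg_le_of_abs_le (abs_real_inner_le_norm _ _) |>.trans_eq' rfl
      have hne : ‖(x - prox x) - (w - prox w)‖ ≤ 2 * ‖x - w‖ := by
        have h1 : (x - prox x) - (w - prox w) = (x - w) - (prox x - prox w) := by abel
        rw [h1]
        calc ‖(x - w) - (prox x - prox w)‖ ≤ ‖x - w‖ + ‖prox x - prox w‖ := norm_sub_le _ _
          _ ≤ 2 * ‖x - w‖ := by
              linarith [prox_nonexp φ hconv c hc prox hprox x w]
      have hsgn : (inner ℝ (x - prox x) (x - w) : ℝ)
          = -(inner ℝ (prox x - x) (x - w) : ℝ) := by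
        rw [← inner_neg_left, neg_sub]
      have hmul : ‖(x - prox x) - (w - prox w)‖ * ‖x - w‖ ≤ 2 * ‖x - w‖ ^ 2 := by
        nlinarith [norm_nonneg ((x - prox x) - (w - prox w)), norm_nonneg (x - w)]
      simp only [hM] at hmw ⊢
      rw [hLval]
      nlinarith [hcs]
    · -- upper bound
      have hmx := hprox x (prox w)
      have hexp : ‖prox w - x‖ ^ 2
          = ‖prox w - w‖ ^ 2 + 2 * (inner ℝ (prox w - w) (w - x) : ℝ) + ‖w - x‖ ^ 2 := by
        have h1 : prox w - x = (prox w - w) + (w - x) := by abel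
        rw [h1, norm_add_sq_real]
      have hsgn : (inner ℝ (prox w - w) (w - x) : ℝ) = (inner ℝ (w - prox w) (x - w) : ℝ) := by
        rw [show w - prox w = -(prox w - w) by abel, show x - w = -(w - x) by abel,
          inner_neg_neg]
      have hnrm : ‖w - x‖ ^ 2 = ‖x - w‖ ^ 2 := by rw [norm_sub_rev]
      rw [hexp, hsgn, hnrm] at hmx
      simp only [hM] at hmx ⊢
      rw [hLval]
      nlinarith [mul_nonneg hc.le (sq_nonneg ‖x - w‖)]
  rw [hasFDerivAt_iff_isLittleO_nhds_zero]
  have hbig : (fun h : E => M (w + h) - M w - L h) =O[𝓝 0] (fun h : E => ‖h‖ ^ 2) := by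
    apply Asymptotics.IsBigO.of_bound (3 * c)
    filter_upwards with h
    have := hbound (w + h)
    simpa [Real.norm_eq_abs, abs_of_nonneg (sq_nonneg ‖h‖)] using this
  refine hbig.trans_isLittleO ?_
  rw [Asymptotics.isLittleO_iff]
  intro ε hε
  rw [Metric.eventually_nhds_iff]
  refine ⟨ε, hε, fun {h} hh => ?_⟩
  have h1 : ‖h‖ < ε := by simpa [dist_eq_norm] using hh
  have h2 : ‖h‖ ^ 2 ≤ ε * ‖h‖ := by nlinarith [norm_nonneg h]
  simpa [Real.norm_eq_abs, abs_of_nonneg (sq_nonneg ‖h‖)] using h2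

/-- Symmetry of Jacobians of prox at points of differentiability. -/
lemma prox_deriv_symm (φ : E → ℝ) (hconv : ConvexOn ℝ Set.univ φ)
    (c : ℝ) (hc : 0 < c) (prox : E → E)
    (hprox : ∀ w u, φ (prox w) + c / 2 * ‖prox w - w‖ ^ 2 ≤ φ u + c / 2 * ‖u - w‖ ^ 2)
    {z : E} {A : E →L[ℝ] E} (hA : HasFDerivAt prox A z) (v w : E) :
    (inner ℝ (A v) w : ℝ) = (inner ℝ (A w) v : ℝ) := by
  set f' : E → (E →L[ℝ] ℝ) := fun y => (innerSL ℝ) (c • (y - prox y)) with hf'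
  have hf : ∀ y, HasFDerivAt (fun x => φ (prox x) + c / 2 * ‖prox x - x‖ ^ 2) (f' y) y := by
    intro y
    have := moreau_hasFDerivAt φ hconv c hc prox hprox y
    simpa [hf', map_smul] using this
  have hg : HasFDerivAt (fun y => c • (y - prox y))
      (c • (ContinuousLinearMap.id ℝ E - A)) z :=
    ((hasFDerivAt_id z).sub hA).const_smul c
  have hx : HasFDerivAt f'
      ((innerSL ℝ (E := E)).comp (c • (ContinuousLinearMap.id ℝ E - A))) z :=
    (innerSL ℝ (E := E)).hasFDerivAt.comp z hg
  have hsym := second_derivative_symmetric hf hx v w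
  simp only [ContinuousLinearMap.comp_apply, ContinuousLinearMap.smul_apply,
    ContinuousLinearMap.sub_apply, ContinuousLinearMap.id_apply, innerSL_apply_apply,
    inner_smul_left, inner_sub_left, RCLike.conj_to_real, map_ofNat] at hsym
  have hvw : (inner ℝ v w : ℝ) = (inner ℝ w v : ℝ) := by rw [real_inner_comm]
  have : c * ((inner ℝ v w : ℝ) - inner ℝ (A v) w) = c * ((inner ℝ w v : ℝ) - inner ℝ (A w) v) := by
    simpa [conj_trivial] using hsym
  have hc' : c ≠ 0 := ne_of_gt hc
  field_simp at this
  nlinarith [this]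

/-- Derivatives of prox inherit firm nonexpansiveness. -/
lemma prox_deriv_firm (φ : E → ℝ) (hconv : ConvexOn ℝ Set.univ φ)
    (c : ℝ) (hc : 0 < c) (prox : E → E)
    (hprox : ∀ w u, φ (prox w) + c / 2 * ‖prox w - w‖ ^ 2 ≤ φ u + c / 2 * ‖u - w‖ ^ 2)
    {z : E} {A : E →L[ℝ] E} (hA : HasFDerivAt prox A z) (v : E) :
    ‖A v‖ ^ 2 ≤ (inner ℝ (A v) v : ℝ) := by
  have h1 : HasDerivAt (fun t : ℝ => z + t • v) v 0 := by
    simpa using ((hasDerivAt_id (0 : ℝ)).smul_const v).const_add z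
  have hl : HasFDerivAt prox A (z + (0 : ℝ) • v) := by simpa using hA
  have h2 : HasDerivAt (fun t : ℝ => prox (z + t • v)) (A v) 0 :=
    hl.comp_hasDerivAt 0 h1
  have hslope := hasDerivAt_iff_tendsto_slope.mp h2
  set F : ℝ → E := fun t => prox (z + t • v) with hF
  have hq : Tendsto (fun t : ℝ => (inner ℝ (slope F 0 t) v : ℝ) - ‖slope F 0 t‖ ^ 2)
      (𝓝[≠] (0 : ℝ)) (𝓝 ((inner ℝ (A v) v : ℝ) - ‖A v‖ ^ 2)) :=
    ((hslope.inner tendsto_const_nhds).sub ((hslope.norm).pow 2))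
  have hpt : ∀ t ∈ ({(0:ℝ)}ᶜ : Set ℝ), 0 ≤ (inner ℝ (slope F 0 t) v : ℝ) - ‖slope F 0 t‖ ^ 2 := by
    intro t ht
    have ht0 : t ≠ 0 := ht
    have hs : slope F 0 t = t⁻¹ • (F t - F 0) := by
      simp [slope_def_field, div_eq_inv_mul, slope, vsub_eq_sub]
    have hF0 : F 0 = prox z := by simp [hF]
    set d : E := F t - F 0 with hd
    have hfirm : ‖d‖ ^ 2 ≤ t * (inner ℝ d v : ℝ) := by
      have := prox_firm φ hconv c hc prox hprox (z + t • v) z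
      have harg : (z + t • v) - z = t • v := by abel
      rw [harg] at this
      rw [real_inner_smul_right] at this
      simpa [hd, hF, hF0] using this
    rw [hs]
    have hn : ‖t⁻¹ • d‖ ^ 2 = (t⁻¹) ^ 2 * ‖d‖ ^ 2 := by
      rw [norm_smul, mul_pow, Real.norm_eq_abs, sq_abs]
    have hi : (inner ℝ (t⁻¹ • d) v : ℝ) = t⁻¹ * (inner ℝ d v : ℝ) := real_inner_smul_left _ _ _
    rw [hn, hi]
    have hmul := mul_le_mul_of_nonneg_left hfirm (sq_nonneg t⁻¹)
    have heq : (t⁻¹) ^ 2 * (t * (inner ℝ d v : ℝ)) = t⁻¹ * (inner ℝ d v : ℝ) := by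
      field_simp
    linarith [heq ▸ hmul]
  have h0 : (0:ℝ) ≤ (inner ℝ (A v) v : ℝ) - ‖A v‖ ^ 2 :=
    ge_of_tendsto hq (eventually_nhdsWithin_of_forall hpt)
  linarith

end Aux

/-- The limiting (B-) Jacobian of a map `F` at `z`: limits of Jacobians of `F` at
points of differentiability converging to `z`. -/
def limitingJacobian {m : ℕ}
    (F : EuclideanSpace ℝ (Fin m) → EuclideanSpace ℝ (Fin m)) (z : EuclideanSpace ℝ (Fin m)) :
    Set (EuclideanSpace ℝ (Fin m) →L[ℝ] EuclideanSpace ℝ (Fin m)) :=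
  {G | ∃ (zs : ℕ → EuclideanSpace ℝ (Fin m))
        (As : ℕ → EuclideanSpace ℝ (Fin m) →L[ℝ] EuclideanSpace ℝ (Fin m)),
      Filter.Tendsto zs Filter.atTop (nhds z) ∧
      (∀ k, HasFDerivAt F (As k) (zs k)) ∧
      Filter.Tendsto As Filter.atTop (nhds G)}

/-- Clarke's generalized Jacobian: the convex hull of the limiting Jacobian. -/
noncomputable def clarkeJacobian {m : ℕ}
    (F : EuclideanSpace ℝ (Fin m) → EuclideanSpace ℝ (Fin m)) (z : EuclideanSpace ℝ (Fin m)) :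
    Set (EuclideanSpace ℝ (Fin m) →L[ℝ] EuclideanSpace ℝ (Fin m)) :=
  convexHull ℝ (limitingJacobian F z)

theorem clarke_jacobian_prox (m : ℕ)
    (φ : EuclideanSpace ℝ (Fin m) → ℝ)
    (hconv : ConvexOn ℝ Set.univ φ) (hlsc : LowerSemicontinuous φ)
    (c : ℝ) (hc : 0 < c)
    (prox : EuclideanSpace ℝ (Fin m) → EuclideanSpace ℝ (Fin m))
    -- `prox w = prox_{φ/c}(w)` : the unique minimizer of `u ↦ φ(u) + (c/2)‖u − w‖²`
    (hprox : ∀ w u, φ (prox w) + c / 2 * ‖prox w - w‖ ^ 2 ≤ φ u + c / 2 * ‖u - w‖ ^ 2) :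
    ∀ (z : EuclideanSpace ℝ (Fin m)) (G : EuclideanSpace ℝ (Fin m) →L[ℝ] EuclideanSpace ℝ (Fin m)),
      G ∈ clarkeJacobian prox z →
        (∀ v w, (inner ℝ (G v) w : ℝ) = (inner ℝ v (G w) : ℝ)) ∧
        (∀ v, 0 ≤ (inner ℝ (G v) v : ℝ)) ∧
        ‖G‖ ≤ 1 := by
  intro z G hG
  set S : Set (EuclideanSpace ℝ (Fin m) →L[ℝ] EuclideanSpace ℝ (Fin m)) :=
    {A | (∀ v w, (inner ℝ (A v) w : ℝ) = (inner ℝ (A w) v : ℝ)) ∧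
      ∀ v, ‖A v‖ ^ 2 ≤ (inner ℝ (A v) v : ℝ)}
  have hSconv : Convex ℝ S := by
    intro A hA B hB a b ha hb hab
    constructor
    · intro v w
      simp only [ContinuousLinearMap.add_apply, ContinuousLinearMap.smul_apply,
        inner_add_left, real_inner_smul_left]
      rw [hA.1 v w, hB.1 v w]
    · intro v
      have h1 : ‖(a • A + b • B) v‖ ≤ a * ‖A v‖ + b * ‖B v‖ := by
        simp only [ContinuousLinearMap.add_apply, ContinuousLinearMap.smul_apply]
        calc ‖a • A v + b • B v‖ ≤ ‖a • A v‖ + ‖b • B v‖ := norm_add_le _ _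
          _ = a * ‖A v‖ + b * ‖B v‖ := by
              rw [norm_smul, norm_smul, Real.norm_eq_abs, Real.norm_eq_abs,
                abs_of_nonneg ha, abs_of_nonneg hb]
      have h2 : (inner ℝ ((a • A + b • B) v) v : ℝ)
          = a * (inner ℝ (A v) v : ℝ) + b * (inner ℝ (B v) v : ℝ) := by
        simp only [ContinuousLinearMap.add_apply, ContinuousLinearMap.smul_apply,
          inner_add_left, real_inner_smul_left]
      rw [h2]
      have h3 : ‖(a • A + b • B) v‖ ^ 2 ≤ (a * ‖A v‖ + b * ‖B v‖) ^ 2 :=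
        pow_le_pow_left₀ (norm_nonneg _) h1 2
      have h4 : (a * ‖A v‖ + b * ‖B v‖) ^ 2 ≤ a * ‖A v‖ ^ 2 + b * ‖B v‖ ^ 2 := by
        nlinarith [mul_nonneg ha hb, sq_nonneg (‖A v‖ - ‖B v‖)]
      have h5 : a * ‖A v‖ ^ 2 ≤ a * (inner ℝ (A v) v : ℝ) :=
        mul_le_mul_of_nonneg_left (hA.2 v) ha
      have h6 : b * ‖B v‖ ^ 2 ≤ b * (inner ℝ (B v) v : ℝ) :=
        mul_le_mul_of_nonneg_left (hB.2 v) hb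
      linarith
  have hSlim : limitingJacobian prox z ⊆ S := by
    rintro A ⟨zs, As, hzs, hd, hAs⟩
    have hptw : ∀ v : EuclideanSpace ℝ (Fin m), Tendsto (fun k => As k v) atTop (𝓝 (A v)) := fun v =>
      ((ContinuousLinearMap.apply ℝ (EuclideanSpace ℝ (Fin m)) v).continuous.tendsto A).comp hAs
    constructor
    · intro v w
      have t1 : Tendsto (fun k => (inner ℝ (As k v) w : ℝ)) atTop (𝓝 (inner ℝ (A v) w : ℝ)) :=
        (hptw v).inner tendsto_const_nhds
      have t2 : Tendsto (fun k => (inner ℝ (As k w) v : ℝ)) atTop (𝓝 (inner ℝ (A w) v : ℝ)) :=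
        (hptw w).inner tendsto_const_nhds
      refine tendsto_nhds_unique t1 (t2.congr fun k => ?_)
      exact (prox_deriv_symm φ hconv c hc prox hprox (hd k) v w).symm
    · intro v
      have t1 : Tendsto (fun k => ‖As k v‖ ^ 2) atTop (𝓝 (‖A v‖ ^ 2)) :=
        ((hptw v).norm).pow 2
      have t2 : Tendsto (fun k => (inner ℝ (As k v) v : ℝ)) atTop (𝓝 (inner ℝ (A v) v : ℝ)) :=
        (hptw v).inner tendsto_const_nhds
      exact le_of_tendsto_of_tendsto' t1 t2 fun k =>
        prox_deriv_firm φ hconv c hc prox hprox (hd k) v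
  have hGS : G ∈ S := convexHull_min hSlim hSconv hG
  refine ⟨fun v w => ?_, fun v => ?_, ?_⟩
  · rw [hGS.1 v w, real_inner_comm]
  · exact le_trans (sq_nonneg ‖G v‖) (hGS.2 v)
  · refine ContinuousLinearMap.opNorm_le_bound G zero_le_one fun v => ?_
    rw [one_mul]
    nlinarith [hGS.2 v, real_inner_le_norm (G v) v, norm_nonneg (G v), norm_nonneg v]
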